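/- arXiv:2207.09278 — 2 statements merged into one kernel-verified Lean document; each statement's English description precedes it below -/
import Mathlib

section
/- Let 1 < p < ∞, let S₁, S₂ ⊂ ℝ be disjoint compact sets, and let f ∈ PW^p_{S₁} with f ∈ L^p(ℝ). Then ‖f‖_{L^p} ≤ ‖f + g‖_{L^p} for all g ∈ PW^p_{S₂} if and only if ∫_ℝ |f(x)|^{p-2} f(x) conj(g(x)) dx = 0 for all g ∈ PW^p_{S₂}. -/
open MeasureTheory Real Complex FourierTransform Set Pointwise Filter
open scoped ENNReal Topology

/-- The distributional Fourier transform of `f` is supported in the closed set `S`: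
for every Schwartz function `φ` whose support is disjoint from `S`, the pairing
`⟨𝓕 f, φ⟩ = ⟨f, 𝓕 φ⟩` vanishes. -/
def HasSpectrumIn (f : ℝ → ℂ) (S : Set ℝ) : Prop :=
  ∀ φ : SchwartzMap ℝ ℂ, Disjoint (tsupport (φ : ℝ → ℂ)) S →
    ∫ x, f x * 𝓕 (φ : ℝ → ℂ) x = 0

/-- Membership in the Paley-Wiener space `PW^p_S`. -/
def MemPW (p : ℝ≥0∞) (f : ℝ → ℂ) (S : Set ℝ) : Prop :=
  MemLp f p volume ∧ HasSpectrumIn f S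

/-- A finite union of closed intervals. -/
def IsFinUnionIntervals (S : Set ℝ) : Prop :=
  ∃ (n : ℕ) (a b : Fin n → ℝ), S = ⋃ i, Icc (a i) (b i)

variable {p : ℝ}

/-- Pointwise derivative of `t ↦ ‖a + t b‖ ^ p` at `0`. -/
lemma shapiro_hasDerivAt (hp : 1 < p) (a b : ℂ) :
    HasDerivAt (fun t : ℝ => ‖a + t • b‖ ^ p)
      (p * ‖a‖ ^ (p - 2) * (a * (starRingEnd ℂ) b).re) 0 := by
  by_cases ha : a = 0
  · subst ha
    have hz : p * ‖(0:ℂ)‖ ^ (p - 2) * ((0:ℂ) * (starRingEnd ℂ) b).re = 0 := by simp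
    rw [hz, hasDerivAt_iff_tendsto_slope]
    apply squeeze_zero_norm' (a := fun t : ℝ => |t| ^ (p - 1) * ‖b‖ ^ p)
    · filter_upwards [self_mem_nhdsWithin] with t (ht : t ≠ 0)
      have h1 : slope (fun t : ℝ => ‖(0:ℂ) + t • b‖ ^ p) 0 t = ‖t • b‖ ^ p / t := by
        simp [slope_def_field, Real.zero_rpow (by linarith : p ≠ 0)]
      have h2 : ‖t • b‖ ^ p = |t| ^ p * ‖b‖ ^ p := by
        rw [norm_smul, Real.norm_eq_abs, Real.mul_rpow (abs_nonneg _) (norm_nonneg _)]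
      rw [h1, norm_div, Real.norm_eq_abs, Real.norm_eq_abs,
        _root_.abs_of_nonneg (by positivity : (0:ℝ) ≤ ‖t • b‖ ^ p), h2]
      refine le_of_eq ?_
      rw [Real.rpow_sub_one (abs_ne_zero.mpr ht) p] at *
      ring
    · have h1 : ContinuousAt (fun t : ℝ => |t| ^ (p - 1)) 0 :=
        (Real.continuousAt_rpow_const _ _ (Or.inr (by linarith : (0:ℝ) ≤ p - 1))).comp
          _root_.continuous_abs.continuousAt
      have h2 : Tendsto (fun t : ℝ => |t| ^ (p - 1) * ‖b‖ ^ p) (𝓝 0)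
          (𝓝 (|(0:ℝ)| ^ (p - 1) * ‖b‖ ^ p)) := (h1.mul continuousAt_const).tendsto
      have h3 : |(0:ℝ)| ^ (p - 1) * ‖b‖ ^ p = 0 := by
        simp [Real.zero_rpow (show p - 1 ≠ 0 by linarith)]
      rw [h3] at h2
      exact h2.mono_left nhdsWithin_le_nhds
  · have habs : ∀ z : ℂ, ‖z‖ ^ p = Complex.normSq z ^ (p / 2) := by
      intro z
      rw [← Complex.sq_norm, ← Real.rpow_natCast ‖z‖ 2,
        ← Real.rpow_mul (norm_nonneg _)]
      push_cast
      rw [show (2:ℝ) * (p/2) = p by ring]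
    have hne : Complex.normSq a ≠ 0 := by
      simpa [Complex.normSq_eq_norm_sq] using ha
    have hn : HasDerivAt (fun t : ℝ => Complex.normSq (a + t • b))
        (2 * (a * (starRingEnd ℂ) b).re) 0 := by
      have hfe : (fun t : ℝ => Complex.normSq (a + t • b)) =
          fun t : ℝ => Complex.normSq a + Complex.normSq b * t ^ 2
            + 2 * (a * (starRingEnd ℂ) b).re * t := by
        funext t
        rw [Complex.normSq_add]
        have h1 : Complex.normSq (t • b) = Complex.normSq b * t ^ 2 := by
          rw [Complex.real_smul, Complex.normSq_mul, Complex.normSq_ofReal]; ring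
        have h2 : (a * (starRingEnd ℂ) (t • b)).re = (a * (starRingEnd ℂ) b).re * t := by
          rw [Complex.real_smul, map_mul, Complex.conj_ofReal]
          rw [show a * ((t:ℂ) * (starRingEnd ℂ) b) = (t:ℂ) * (a * (starRingEnd ℂ) b) by ring]
          rw [Complex.re_ofReal_mul]; ring
        rw [h1, h2]; ring
      rw [hfe]
      have := ((hasDerivAt_pow 2 (0:ℝ)).const_mul (Complex.normSq b)).const_add
          (Complex.normSq a) |>.add ((hasDerivAt_id (0:ℝ)).const_mul
          (2 * (a * (starRingEnd ℂ) b).re))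
      refine this.congr_deriv ?_
      simp
    have hr := Real.hasDerivAt_rpow_const (x := Complex.normSq a) (p := p / 2) (Or.inl hne)
    have h0 : Complex.normSq (a + (0:ℝ) • b) = Complex.normSq a := by simp
    have hcomp := HasDerivAt.comp (0:ℝ) (h0 ▸ hr) hn
    have hfe2 : (fun x : ℝ => x ^ (p/2)) ∘ (fun t : ℝ => Complex.normSq (a + t • b))
        = fun t : ℝ => ‖a + t • b‖ ^ p := by
      funext t; exact (habs _).symm
    rw [hfe2, h0] at hcomp
    refine hcomp.congr_deriv ?_
    have hns : Complex.normSq a ^ (p / 2 - 1) = ‖a‖ ^ (p - 2) := by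
      rw [← Complex.sq_norm, ← Real.rpow_natCast ‖a‖ 2,
        ← Real.rpow_mul (norm_nonneg _)]
      push_cast
      rw [show (2:ℝ) * (p/2 - 1) = p - 2 by ring]
    rw [hns]; ring
lemma shapiro_convexOn (hp : 1 < p) (a b : ℂ) :
    ConvexOn ℝ univ (fun t : ℝ => ‖a + t • b‖ ^ p) := by
  have h1 : ConvexOn ℝ univ (fun t : ℝ => ‖a + t • b‖) := by
    refine ⟨convex_univ, fun x _ y _ α β hα hβ hαβ => ?_⟩
    have he : a + (α • x + β • y) • b = α • (a + x • b) + β • (a + y • b) := by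
      obtain rfl : β = 1 - α := by linarith
      simp only [smul_eq_mul]
      module
    show ‖a + (α • x + β • y) • b‖ ≤ α • ‖a + x • b‖ + β • ‖a + y • b‖
    rw [he]
    calc ‖α • (a + x • b) + β • (a + y • b)‖
        ≤ ‖α • (a + x • b)‖ + ‖β • (a + y • b)‖ := norm_add_le _ _
      _ = α * ‖a + x • b‖ + β * ‖a + y • b‖ := by
          rw [norm_smul, norm_smul, Real.norm_eq_abs, Real.norm_eq_abs,
            _root_.abs_of_nonneg hα, _root_.abs_of_nonneg hβ]
      _ = α • ‖a + x • b‖ + β • ‖a + y • b‖ := by simp [smul_eq_mul]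
  refine ⟨convex_univ, fun x _ y _ α β hα hβ hαβ => ?_⟩
  show ‖a + (α • x + β • y) • b‖ ^ p ≤ α • ‖a + x • b‖ ^ p + β • ‖a + y • b‖ ^ p
  have H := h1.2 (mem_univ x) (mem_univ y) hα hβ hαβ
  simp only [smul_eq_mul] at H ⊢
  calc ‖a + (α * x + β * y) • b‖ ^ p
      ≤ (α * ‖a + x • b‖ + β * ‖a + y • b‖) ^ p := by
        apply Real.rpow_le_rpow (norm_nonneg _) H (by positivity)
    _ ≤ α * ‖a + x • b‖ ^ p + β * ‖a + y • b‖ ^ p := by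
        have := (convexOn_rpow hp.le).2 (mem_Ici.mpr (norm_nonneg (a + x • b)))
          (mem_Ici.mpr (norm_nonneg (a + y • b))) hα hβ hαβ
        simpa [smul_eq_mul] using this

lemma shapiro_pointwise (hp : 1 < p) (a b : ℂ) :
    ‖a‖ ^ p + p * ‖a‖ ^ (p - 2) * (a * (starRingEnd ℂ) b).re ≤ ‖a + b‖ ^ p := by
  have h := (shapiro_convexOn hp a b).le_slope_of_hasDerivAt (mem_univ (0:ℝ))
    (mem_univ (1:ℝ)) one_pos (shapiro_hasDerivAt hp a b)
  rw [slope_def_field] at h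
  simp only [zero_smul, add_zero, one_smul, sub_zero, div_one] at h
  linarith
lemma shapiro_lipschitz (hp : 1 < p) (a b : ℂ) :
    LipschitzOnWith (Real.nnabs (p * ((‖a‖ + ‖b‖) ^ (p - 1) * ‖b‖)))
      (fun t : ℝ => ‖a + t • b‖ ^ p) (Metric.ball (0:ℝ) 1) := by
  set M := ‖a‖ + ‖b‖ with hM
  have hM0 : 0 ≤ M := by positivity
  have houter : LipschitzOnWith (Real.toNNReal (p * M ^ (p - 1)))
      (fun x : ℝ => x ^ p) (Icc 0 M) := by
    apply (convex_Icc 0 M).lipschitzOnWith_of_nnnorm_hasDerivWithin_le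
      (f' := fun x : ℝ => p * x ^ (p - 1))
      (fun x _ => (Real.hasDerivAt_rpow_const (Or.inr hp.le)).hasDerivWithinAt)
    intro x hx
    have hpx : (0:ℝ) ≤ p * x ^ (p - 1) :=
      mul_nonneg (by linarith) (Real.rpow_nonneg hx.1 _)
    have hpM : (0:ℝ) ≤ p * M ^ (p - 1) :=
      mul_nonneg (by linarith) (Real.rpow_nonneg hM0 _)
    rw [← NNReal.coe_le_coe, coe_nnnorm, Real.coe_toNNReal _ hpM,
      Real.norm_eq_abs, _root_.abs_of_nonneg hpx]
    have : x ^ (p - 1) ≤ M ^ (p - 1) := Real.rpow_le_rpow hx.1 hx.2 (by linarith)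
    nlinarith [this, hp]
  have hinner : LipschitzWith ‖b‖₊ (fun t : ℝ => ‖a + t • b‖) := by
    apply LipschitzWith.of_dist_le_mul
    intro s t
    rw [Real.dist_eq]
    calc |‖a + s • b‖ - ‖a + t • b‖| ≤ ‖(a + s • b) - (a + t • b)‖ := abs_norm_sub_norm_le _ _
      _ = ‖(s - t) • b‖ := by rw [show (a + s • b) - (a + t • b) = (s - t) • b by module]
      _ = |s - t| * ‖b‖ := by rw [norm_smul, Real.norm_eq_abs]
      _ = ‖b‖ * dist s t := by rw [Real.dist_eq]; ring
  have hmaps : MapsTo (fun t : ℝ => ‖a + t • b‖) (Metric.ball (0:ℝ) 1) (Icc 0 M) := by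
    intro t ht
    rw [Metric.mem_ball, Real.dist_eq, sub_zero] at ht
    refine ⟨norm_nonneg _, ?_⟩
    calc ‖a + t • b‖ ≤ ‖a‖ + ‖t • b‖ := norm_add_le _ _
      _ = ‖a‖ + |t| * ‖b‖ := by rw [norm_smul, Real.norm_eq_abs]
      _ ≤ ‖a‖ + 1 * ‖b‖ := by
          have := mul_le_mul_of_nonneg_right ht.le (norm_nonneg b)
          linarith
      _ = M := by rw [hM]; ring
  have hinner' : LipschitzOnWith ‖b‖₊ (fun t : ℝ => ‖a + t • b‖) (Metric.ball (0:ℝ) 1) :=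
    hinner.lipschitzOnWith
  have hcomp := houter.comp hinner' hmaps
  have hnn : (0:ℝ) ≤ p * (M ^ (p - 1) * ‖b‖) :=
    mul_nonneg (by linarith) (mul_nonneg (Real.rpow_nonneg hM0 _) (norm_nonneg b))
  have hpM : (0:ℝ) ≤ p * M ^ (p - 1) :=
    mul_nonneg (by linarith) (Real.rpow_nonneg hM0 _)
  have hKle : (p * M ^ (p - 1)).toNNReal * ‖b‖₊ ≤ Real.nnabs (p * (M ^ (p - 1) * ‖b‖)) := by
    rw [← NNReal.coe_le_coe]
    push_cast [Real.coe_nnabs]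
    rw [Real.coe_toNNReal _ hpM, _root_.abs_of_nonneg hnn]
    exact le_of_eq (by ring)
  intro x hx y hy
  exact le_trans (hcomp hx hy) (mul_le_mul_left (ENNReal.coe_le_coe.mpr hKle) _)

lemma shapiro_integrable_mul (hp : 1 < p) {u : ℝ → ℝ} {v : ℝ → ℂ}
    (hu : MemLp u (ENNReal.ofReal p) volume) (hv : MemLp v (ENNReal.ofReal p) volume) :
    Integrable (fun x => ‖u x‖ ^ (p - 1) * ‖v x‖) volume := by
  have hq0 : ENNReal.ofReal p ≠ 0 := by
    simp only [ne_eq, ENNReal.ofReal_eq_zero, not_le]; linarith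
  have h1 : MemLp (fun x => ‖u x‖ ^ (p - 1))
      (ENNReal.ofReal p / ENNReal.ofReal (p - 1)) volume := by
    have := hu.norm_rpow_div (ENNReal.ofReal (p - 1))
    rwa [ENNReal.toReal_ofReal (by linarith)] at this
  have hpqr : (1:ℝ≥0∞) / 1 = 1 / (ENNReal.ofReal p / ENNReal.ofReal (p - 1))
      + 1 / ENNReal.ofReal p := by
    rw [one_div (ENNReal.ofReal p / ENNReal.ofReal (p - 1)),
      ENNReal.inv_div (Or.inl ENNReal.ofReal_ne_top) (Or.inr hq0),
      ENNReal.div_add_div_same]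
    rw [show (ENNReal.ofReal (p - 1) + 1) = ENNReal.ofReal p by
      rw [← ENNReal.ofReal_one, ← ENNReal.ofReal_add (by linarith) (by norm_num)]
      norm_num]
    rw [ENNReal.div_self hq0 ENNReal.ofReal_ne_top]
    norm_num
  have h2 : MemLp ((fun x => ‖u x‖ ^ (p - 1)) • v) 1 volume := by
    haveI : ENNReal.HolderTriple (ENNReal.ofReal p / ENNReal.ofReal (p - 1)) (ENNReal.ofReal p) 1 :=
      ⟨by simpa only [one_div, inv_one] using hpqr.symm⟩
    exact hv.smul h1
  have h3 := (memLp_one_iff_integrable.mp h2).norm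
  have he : (fun x => ‖((fun x => ‖u x‖ ^ (p - 1)) • v) x‖)
      = fun x => ‖u x‖ ^ (p - 1) * ‖v x‖ := by
    funext x
    simp only [Pi.smul_apply', norm_smul, Real.norm_eq_abs]
    rw [_root_.abs_of_nonneg (Real.rpow_nonneg (abs_nonneg _) _)]
  rwa [he] at h3

lemma shapiro_eLpNorm_le_iff (hp : 1 < p) {u w : ℝ → ℂ}
    (hu : MemLp u (ENNReal.ofReal p) volume) (hw : MemLp w (ENNReal.ofReal p) volume) :
    (eLpNorm u (ENNReal.ofReal p) volume ≤ eLpNorm w (ENNReal.ofReal p) volume ↔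
      ∫ x, ‖u x‖ ^ p ≤ ∫ x, ‖w x‖ ^ p) := by
  have hp0 : 0 < p := by linarith
  have hq0 : ENNReal.ofReal p ≠ 0 := by
    simp only [ne_eq, ENNReal.ofReal_eq_zero, not_le]; linarith
  have hqt : ENNReal.ofReal p ≠ ∞ := ENNReal.ofReal_ne_top
  have key : ∀ {h : ℝ → ℂ}, MemLp h (ENNReal.ofReal p) volume →
      ENNReal.ofReal (∫ x, ‖h x‖ ^ p) = ∫⁻ x, ‖h x‖ₑ ^ p := by
    intro h hh
    have hi := hh.integrable_norm_rpow hq0 hqt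
    rw [ENNReal.toReal_ofReal hp0.le] at hi
    rw [MeasureTheory.ofReal_integral_eq_lintegral_ofReal hi
      (ae_of_all _ fun x => Real.rpow_nonneg (norm_nonneg _) _)]
    apply lintegral_congr
    intro x
    rw [← ENNReal.ofReal_rpow_of_nonneg (norm_nonneg _) hp0.le, ofReal_norm_eq_enorm]
  rw [eLpNorm_eq_lintegral_rpow_enorm_toReal hq0 hqt, eLpNorm_eq_lintegral_rpow_enorm_toReal hq0 hqt,
    ENNReal.toReal_ofReal hp0.le,
    ENNReal.rpow_le_rpow_iff (by positivity : (0:ℝ) < 1 / p),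
    ← key hu, ← key hw,
    ENNReal.ofReal_le_ofReal_iff (integral_nonneg fun x => Real.rpow_nonneg (norm_nonneg _) _)]
lemma shapiro_integrableZ (hp : 1 < p) {f g : ℝ → ℂ}
    (hf : MemLp f (ENNReal.ofReal p) volume) (hg : MemLp g (ENNReal.ofReal p) volume) :
    Integrable (fun x => ((‖f x‖ ^ (p - 2) : ℝ) : ℂ) * f x * (starRingEnd ℂ) (g x)) volume := by
  have hbound : Integrable (fun x => ‖‖f x‖‖ ^ (p - 1) * ‖g x‖) volume :=
    shapiro_integrable_mul hp hf.norm hg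
  have hmeas : AEStronglyMeasurable
      (fun x => ((‖f x‖ ^ (p - 2) : ℝ) : ℂ) * f x * (starRingEnd ℂ) (g x)) volume := by
    apply AEStronglyMeasurable.mul
    apply AEStronglyMeasurable.mul
    · exact (Complex.continuous_ofReal.comp_aestronglyMeasurable
        ((hf.1.norm.aemeasurable.pow_const (p - 2)).aestronglyMeasurable))
    · exact hf.1
    · exact (Complex.continuous_conj.comp_aestronglyMeasurable hg.1)
  apply hbound.mono' hmeas
  filter_upwards with x
  rw [norm_mul, norm_mul, Complex.norm_real, Real.norm_eq_abs,
    _root_.abs_of_nonneg (Real.rpow_nonneg (norm_nonneg _) _), norm_norm, RCLike.norm_conj]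
  by_cases hfx : f x = 0
  · simp [hfx, Real.zero_rpow (show p - 1 ≠ 0 by linarith)]
  · have h1 : ‖f x‖ ^ (p - 2) * ‖f x‖ = ‖f x‖ ^ (p - 1) := by
      rw [← Real.rpow_add_one (norm_ne_zero_iff.mpr hfx) (p - 2),
        show p - 2 + 1 = p - 1 by ring]
    rw [h1]

lemma shapiro_hasDerivAt_integral (hp : 1 < p) {f g : ℝ → ℂ}
    (hf : MemLp f (ENNReal.ofReal p) volume) (hg : MemLp g (ENNReal.ofReal p) volume) :
    HasDerivAt (fun t : ℝ => ∫ x, ‖f x + t • g x‖ ^ p)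
      (∫ x, p * ‖f x‖ ^ (p - 2) * (f x * (starRingEnd ℂ) (g x)).re) 0 := by
  have hq0 : ENNReal.ofReal p ≠ 0 := by
    simp only [ne_eq, ENNReal.ofReal_eq_zero, not_le]; linarith
  have hqt : ENNReal.ofReal p ≠ ∞ := ENNReal.ofReal_ne_top
  have hF_meas : ∀ᶠ t in 𝓝 (0:ℝ), AEStronglyMeasurable
      (fun x => ‖f x + t • g x‖ ^ p) volume := by
    filter_upwards with t
    exact ((hf.1.add (hg.1.const_smul t)).norm.aemeasurable.pow_const p).aestronglyMeasurable
  have hF_int : Integrable (fun x => ‖f x + (0:ℝ) • g x‖ ^ p) volume := by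
    have := hf.integrable_norm_rpow hq0 hqt
    rw [ENNReal.toReal_ofReal (by linarith)] at this
    exact this.congr (by filter_upwards with x; simp)
  have hF'_meas : AEStronglyMeasurable
      (fun x => p * ‖f x‖ ^ (p - 2) * (f x * (starRingEnd ℂ) (g x)).re) volume := by
    apply AEStronglyMeasurable.mul
    · exact (aemeasurable_const.mul
        (hf.1.norm.aemeasurable.pow_const (p - 2))).aestronglyMeasurable
    · exact Complex.continuous_re.comp_aestronglyMeasurable
        (hf.1.mul (Complex.continuous_conj.comp_aestronglyMeasurable hg.1))
  have h_lip : ∀ᵐ x ∂(volume : Measure ℝ), LipschitzOnWith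
      (Real.nnabs (p * ((‖f x‖ + ‖g x‖) ^ (p - 1) * ‖g x‖)))
      (fun t : ℝ => ‖f x + t • g x‖ ^ p) (Metric.ball (0:ℝ) 1) := by
    filter_upwards with x
    exact shapiro_lipschitz hp (f x) (g x)
  have hbound : Integrable (fun x => p * ((‖f x‖ + ‖g x‖) ^ (p - 1) * ‖g x‖)) volume := by
    apply Integrable.const_mul
    have := shapiro_integrable_mul hp (hf.norm.add hg.norm) hg
    apply this.congr
    filter_upwards with x
    simp only [Pi.add_apply]
    rw [Real.norm_eq_abs, _root_.abs_of_nonneg (by positivity)]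
  have h_diff : ∀ᵐ x ∂(volume : Measure ℝ), HasDerivAt
      (fun t : ℝ => ‖f x + t • g x‖ ^ p)
      (p * ‖f x‖ ^ (p - 2) * (f x * (starRingEnd ℂ) (g x)).re) 0 := by
    filter_upwards with x
    exact shapiro_hasDerivAt hp (f x) (g x)
  exact (hasDerivAt_integral_of_dominated_loc_of_lip (Metric.ball_mem_nhds 0 one_pos) hF_meas hF_int hF'_meas
    h_lip hbound h_diff).2

lemma HasSpectrumIn.const_mul' {g : ℝ → ℂ} {S : Set ℝ} (h : HasSpectrumIn g S) (c : ℂ) :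
    HasSpectrumIn (fun x => c * g x) S := by
  intro φ hφ
  simp_rw [mul_assoc]
  rw [MeasureTheory.integral_const_mul, h φ hφ, mul_zero]
/-- Shapiro's criterion. For `1 < p < ∞` and disjoint compact sets
`S₁, S₂ ⊆ ℝ` and `f ∈ PW^p_{S₁}`: `‖f‖_p ≤ ‖f + g‖_p` for every `g ∈ PW^p_{S₂}` iff
`∫ |f|^{p-2} f conj g = 0` for every `g ∈ PW^p_{S₂}`. -/
theorem stmt_2 (p : ℝ) (hp : 1 < p) (S₁ S₂ : Set ℝ) (h1 : IsCompact S₁) (h2 : IsCompact S₂)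
    (hdisj : Disjoint S₁ S₂) (f : ℝ → ℂ) (hf : MemLp f (ENNReal.ofReal p) volume)
    (hfs : HasSpectrumIn f S₁) :
    (∀ g : ℝ → ℂ, MemLp g (ENNReal.ofReal p) volume → HasSpectrumIn g S₂ →
        eLpNorm f (ENNReal.ofReal p) volume ≤ eLpNorm (f + g) (ENNReal.ofReal p) volume) ↔
    (∀ g : ℝ → ℂ, MemLp g (ENNReal.ofReal p) volume → HasSpectrumIn g S₂ →
        ∫ x, ((‖f x‖ ^ (p - 2) : ℝ) : ℂ) * f x * (starRingEnd ℂ) (g x) = 0) := by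
  have hq0 : ENNReal.ofReal p ≠ 0 := by
    simp only [ne_eq, ENNReal.ofReal_eq_zero, not_le]; linarith
  have hqt : ENNReal.ofReal p ≠ ∞ := ENNReal.ofReal_ne_top
  have hZdef : ∀ g : ℝ → ℂ,
      (fun x => ((‖f x‖ ^ (p - 2) : ℝ) : ℂ) * f x * (starRingEnd ℂ) (g x))
      = fun x => ((‖f x‖ ^ (p - 2) : ℝ) : ℂ) * f x * (starRingEnd ℂ) (g x) := by
    intro g; funext x; rfl
  constructor
  · intro H g hg hgs
    have main : ∀ g' : ℝ → ℂ, MemLp g' (ENNReal.ofReal p) volume → HasSpectrumIn g' S₂ →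
        (∫ x, ((‖f x‖ ^ (p - 2) : ℝ) : ℂ) * f x * (starRingEnd ℂ) (g' x)).re = 0 := by
      intro g' hg' hgs'
      have hD := shapiro_hasDerivAt_integral hp hf hg'
      have hmin : IsLocalMin (fun t : ℝ => ∫ x, ‖f x + t • g' x‖ ^ p) 0 := by
        apply Filter.Eventually.of_forall
        intro t
        have hsm : HasSpectrumIn (fun x => t • g' x) S₂ := by
          have hc := hgs'.const_mul' (t : ℂ)
          have he : (fun x => t • g' x) = fun x => (t : ℂ) * g' x :=
            funext fun x => Complex.real_smul
          rw [he]; exact hc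
        have hgt : MemLp (fun x => t • g' x) (ENNReal.ofReal p) volume := hg'.const_smul t
        have hle := (shapiro_eLpNorm_le_iff hp hf (hf.add hgt)).mp (H _ hgt hsm)
        simp only
        calc (∫ x, ‖f x + (0:ℝ) • g' x‖ ^ p) = ∫ x, ‖f x‖ ^ p :=
              integral_congr_ae (Eventually.of_forall fun x => by simp)
          _ ≤ ∫ x, ‖(f + fun x => t • g' x) x‖ ^ p := hle
          _ = ∫ x, ‖f x + t • g' x‖ ^ p :=
              integral_congr_ae (Eventually.of_forall fun x => by simp)
      have hzero := hmin.hasDerivAt_eq_zero hD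
      have hZint := shapiro_integrableZ hp hf hg'
      have hre : ∫ x, p * ‖f x‖ ^ (p - 2) * (f x * (starRingEnd ℂ) (g' x)).re
          = p * (∫ x, ((‖f x‖ ^ (p - 2) : ℝ) : ℂ) * f x * (starRingEnd ℂ) (g' x)).re := by
        have hre' := integral_re hZint
        simp only [RCLike.re_to_complex] at hre'
        rw [← hre', ← integral_const_mul]
        apply integral_congr_ae; filter_upwards with x
        rw [mul_assoc (((‖f x‖ ^ (p - 2) : ℝ)) : ℂ), Complex.re_ofReal_mul]; ring
      rw [hre] at hzero
      rcases mul_eq_zero.mp hzero with h | h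
      · linarith
      · exact h
    rw [hZdef g]
    have hre0 := main g hg hgs
    have hgI : MemLp (fun x => Complex.I * g x) (ENNReal.ofReal p) volume :=
      hg.const_smul Complex.I
    have him0 := main (fun x => Complex.I * g x) hgI (hgs.const_mul' Complex.I)
    have heq : (fun x => ((‖f x‖ ^ (p - 2) : ℝ) : ℂ) * f x * (starRingEnd ℂ) (Complex.I * g x))
        = fun x => (-Complex.I) *
            (((‖f x‖ ^ (p - 2) : ℝ) : ℂ) * f x * (starRingEnd ℂ) (g x)) := by
      funext x; rw [map_mul, Complex.conj_I]; ring
    rw [heq, integral_const_mul] at him0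
    refine Complex.ext ?_ ?_
    · simpa using hre0
    · simp only [Complex.mul_re, Complex.neg_re, Complex.I_re, Complex.neg_im,
        Complex.I_im, neg_zero, zero_mul, zero_sub, neg_neg, neg_mul, one_mul] at him0
      simpa using him0
  · intro H g hg hgs
    have hZint := shapiro_integrableZ hp hf hg
    have hZ0 : (∫ x, ((‖f x‖ ^ (p - 2) : ℝ) : ℂ) * f x * (starRingEnd ℂ) (g x)) = 0 := by
      rw [← hZdef g]; exact H g hg hgs
    rw [shapiro_eLpNorm_le_iff hp hf (hf.add hg)]
    have int1 : Integrable (fun x => ‖f x‖ ^ p) volume := by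
      have := hf.integrable_norm_rpow hq0 hqt
      rwa [ENNReal.toReal_ofReal (by linarith)] at this
    have int3 : Integrable (fun x => ‖(f + g) x‖ ^ p) volume := by
      have := (hf.add hg).integrable_norm_rpow hq0 hqt
      rwa [ENNReal.toReal_ofReal (by linarith)] at this
    have int2 : Integrable
        (fun x => p * ‖f x‖ ^ (p - 2) * (f x * (starRingEnd ℂ) (g x)).re) volume := by
      apply (hZint.re.const_mul p).congr
      filter_upwards with x
      simp only [RCLike.re_to_complex]
      rw [mul_assoc (((‖f x‖ ^ (p - 2) : ℝ)) : ℂ), Complex.re_ofReal_mul]; ring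
    have hpt : ∀ x, ‖f x‖ ^ p + p * ‖f x‖ ^ (p - 2) * (f x * (starRingEnd ℂ) (g x)).re
        ≤ ‖(f + g) x‖ ^ p := fun x => by
      simpa using shapiro_pointwise hp (f x) (g x)
    have hmono := integral_mono (int1.add int2) int3 hpt
    simp only [Pi.add_apply] at hmono
    rw [integral_add int1 int2] at hmono
    have hz : ∫ x, p * ‖f x‖ ^ (p - 2) * (f x * (starRingEnd ℂ) (g x)).re = 0 := by
      have heq2 : ∫ x, p * ‖f x‖ ^ (p - 2) * (f x * (starRingEnd ℂ) (g x)).re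
          = p * (∫ x, ((‖f x‖ ^ (p - 2) : ℝ) : ℂ) * f x * (starRingEnd ℂ) (g x)).re := by
        have hre' := integral_re hZint
        simp only [RCLike.re_to_complex] at hre'
        rw [← hre', ← integral_const_mul]
        apply integral_congr_ae; filter_upwards with x
        rw [mul_assoc (((‖f x‖ ^ (p - 2) : ℝ)) : ℂ), Complex.re_ofReal_mul]; ring
      rw [heq2, hZ0]; simp
    have hfg : (∫ x, ‖(f + g) x‖ ^ p) = ∫ x, ‖f x + g x‖ ^ p :=
      integral_congr_ae (Eventually.of_forall fun x => by simp)
    rw [hfg]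
    linarith
end

section
/- Let 1 < p < ∞ with p ∉ 2ℕ, and let h(x) = (x² − 1)(cos(2πx) − cosh(2π)) / ∏_{k=1}^N ((x+k)² + 1) with N > 1/(2(p-1)) + 2. Then the function g(x) = |h(x)|^{p-2} h(x) is in L^1(ℝ) but is not real-analytic on ℝ; in particular g fails to be analytic at x = 1, where h changes sign. -/
open MeasureTheory Real Complex FourierTransform Set Pointwise Filter
open scoped ENNReal Topology
set_option maxHeartbeats 1000000

lemma aux_rpow_limit {a L : ℝ} (hL : L ≠ 0)
    (hT : Tendsto (fun x : ℝ => (x - 1) ^ a) (𝓝[>] (1:ℝ)) (𝓝 L)) :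
    a = 0 ∧ L = 1 := by
  have hsub : Tendsto (fun x : ℝ => x - 1) (𝓝[>] (1:ℝ)) (𝓝[>] (0:ℝ)) := by
    apply tendsto_nhdsWithin_of_tendsto_nhds_of_eventually_within
    · have h0 : Tendsto (fun x : ℝ => x - 1) (𝓝 (1:ℝ)) (𝓝 (1 - 1)) :=
        (continuous_id.sub continuous_const).tendsto (1:ℝ)
      have h0' : Tendsto (fun x : ℝ => x - 1) (𝓝 (1:ℝ)) (𝓝 0) := by simpa using h0
      exact h0'.mono_left nhdsWithin_le_nhds
    · filter_upwards [self_mem_nhdsWithin] with x hx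
      simpa [Set.mem_Ioi, sub_pos] using hx
  rcases lt_trichotomy a 0 with ha | ha | ha
  · exfalso
    have h1 : Tendsto (fun t : ℝ => (t⁻¹) ^ (-a)) (𝓝[>] (0:ℝ)) atTop :=
      (tendsto_rpow_atTop (by linarith)).comp tendsto_inv_nhdsGT_zero
    have h2 : Tendsto (fun x : ℝ => ((x-1)⁻¹) ^ (-a)) (𝓝[>] (1:ℝ)) atTop := h1.comp hsub
    have h3 : Tendsto (fun x : ℝ => (x-1) ^ a) (𝓝[>] (1:ℝ)) atTop := by
      refine h2.congr' ?_
      filter_upwards [self_mem_nhdsWithin] with x hx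
      have hx0 : (0:ℝ) < x - 1 := by simpa [sub_pos] using hx
      rw [Real.inv_rpow hx0.le, Real.rpow_neg hx0.le, inv_inv]
    exact not_tendsto_nhds_of_tendsto_atTop h3 L hT
  · refine ⟨ha, ?_⟩
    have h0 : Tendsto (fun x : ℝ => (x-1) ^ a) (𝓝[>] (1:ℝ)) (𝓝 1) := by
      have he : (fun x : ℝ => (x-1) ^ a) = fun _ => (1:ℝ) := by
        funext x; rw [ha, Real.rpow_zero]
      rw [he]; exact tendsto_const_nhds
    exact tendsto_nhds_unique hT h0
  · exfalso
    have hc : ContinuousAt (fun t : ℝ => t ^ a) 0 :=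
      Real.continuousAt_rpow_const 0 a (Or.inr ha.le)
    have h0 : Tendsto (fun x : ℝ => (x-1) ^ a) (𝓝[>] (1:ℝ)) (𝓝 ((0:ℝ) ^ a)) :=
      (hc.tendsto).comp (hsub.mono_right nhdsWithin_le_nhds)
    rw [Real.zero_rpow (ne_of_gt ha)] at h0
    exact hL (tendsto_nhds_unique hT h0)

/-- With `h` as in Statement 6 (`1 < p < ∞`, `p ∉ 2ℕ`,
`N > 1/(2(p-1)) + 2`), the function `g = |h|^{p-2} h` is in `L¹(ℝ)` but is not
real-analytic on `ℝ`; in particular it fails to be analytic at `x = 1`. -/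
theorem stmt_7 (p : ℝ) (hp : 1 < p) (hpe : ¬∃ m : ℕ, p = 2 * m)
    (N : ℕ) (hN : 1 / (2 * (p - 1)) + 2 < (N : ℝ))
    (h : ℝ → ℝ)
    (hh : ∀ x, h x = (x ^ 2 - 1) * (Real.cos (2 * π * x) - Real.cosh (2 * π)) /
      ∏ k ∈ Finset.Icc 1 N, ((x + (k : ℝ)) ^ 2 + 1))
    (g : ℝ → ℝ) (hg : ∀ x, g x = |h x| ^ (p - 2) * h x) :
    Integrable g volume ∧ ¬(∀ x : ℝ, AnalyticAt ℝ g x) ∧ ¬AnalyticAt ℝ g 1 := by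
  have hp1 : (0:ℝ) < p - 1 := by linarith
  have hπ2 : (0:ℝ) < 2 * π := by positivity
  have hcosh : (1:ℝ) < Real.cosh (2 * π) := Real.one_lt_cosh.mpr (ne_of_gt hπ2)
  set D : ℝ → ℝ := fun x => ∏ k ∈ Finset.Icc 1 N, ((x + (k:ℝ)) ^ 2 + 1) with hD_def
  have hD : ∀ x, 0 < D x := fun x => Finset.prod_pos fun k _ => by positivity
  have hDcont : Continuous D := continuous_finset_prod _ fun k _ => by continuity
  have hhcont : Continuous h := by
    have he : h = fun x => (x ^ 2 - 1) * (Real.cos (2*π*x) - Real.cosh (2*π)) / D x :=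
      funext hh
    rw [he]
    exact Continuous.div (by continuity) hDcont fun x => (hD x).ne'
  -- |g x| = |h x| ^ (p-1)
  have hgabs : ∀ x, |g x| = |h x| ^ (p - 1) := by
    intro x
    rw [hg, abs_mul, Real.abs_rpow_of_nonneg (abs_nonneg _), _root_.abs_abs,
      show p - 1 = (p-2) + 1 by ring,
      Real.rpow_add' (abs_nonneg _) (by intro hc; exact absurd (by linarith : p = 1) (by linarith [hp])),
      Real.rpow_one]
  -- Integrability
  set K : ℝ := Real.cosh (2*π) + 1 with hK_def
  have hKpos : (0:ℝ) < K := by rw [hK_def]; linarith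
  set P : ℝ := ∏ k ∈ Finset.Icc 1 N, (2 * (1 + (k:ℝ)^2)) with hP_def
  have hPpos : 0 < P := Finset.prod_pos fun k _ => by positivity
  have hDlow : ∀ x : ℝ, (1 + x^2)^N ≤ P * D x := by
    intro x
    have h1 : ((1:ℝ) + x^2)^N = ∏ _k ∈ Finset.Icc 1 N, ((1:ℝ) + x^2) := by
      rw [Finset.prod_const, Nat.card_Icc]; norm_num
    rw [h1, hP_def, hD_def, ← Finset.prod_mul_distrib]
    refine Finset.prod_le_prod (fun k _ => by positivity) (fun k _ => ?_)
    nlinarith [sq_nonneg (x + 2*(k:ℝ)), sq_nonneg ((k:ℝ)*(x + (k:ℝ))), sq_nonneg (k:ℝ)]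
  have hhbound : ∀ x, |h x| ≤ K * P * (1 + x^2) / (1 + x^2)^N := by
    intro x
    have h1x : (0:ℝ) < 1 + x^2 := by positivity
    rw [hh, abs_div, abs_of_pos (hD x), abs_mul]
    have h1 : |x^2 - 1| ≤ 1 + x^2 := by
      rw [abs_le]; constructor <;> nlinarith [sq_nonneg x]
    have h2 : |Real.cos (2*π*x) - Real.cosh (2*π)| ≤ K := by
      have hc1 := Real.neg_one_le_cos (2*π*x)
      have hc2 := Real.cos_le_one (2*π*x)
      rw [hK_def, abs_le]; constructor <;> nlinarith
    rw [div_le_div_iff₀ (hD x) (by positivity)]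
    calc |x^2 - 1| * |Real.cos (2*π*x) - Real.cosh (2*π)| * (1+x^2)^N
        ≤ ((1+x^2) * K) * (P * D x) := by
          apply mul_le_mul _ (hDlow x) (by positivity) (by positivity)
          exact mul_le_mul h1 h2 (abs_nonneg _) (by positivity)
      _ = K * P * (1+x^2) * D x := by ring
  set r : ℝ := 2 * ((N:ℝ) - 1) * (p - 1) with hr_def
  have hr1 : (1:ℝ) < r := by
    have h2 : 1 / (2*(p-1)) < (N:ℝ) - 2 := by linarith
    have h3 := (div_lt_iff₀ (by positivity : (0:ℝ) < 2*(p-1))).mp h2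
    rw [hr_def]; nlinarith
  have hgbound : ∀ x, |g x| ≤ (K*P)^(p-1) * ((1:ℝ) + x^2) ^ (-r/2) := by
    intro x
    rw [hgabs x]
    have h1x : (0:ℝ) < 1 + x^2 := by positivity
    have step1 : |h x| ^ (p-1) ≤ (K * P * (1+x^2) / (1+x^2)^N) ^ (p-1) :=
      Real.rpow_le_rpow (abs_nonneg _) (hhbound x) hp1.le
    refine step1.trans_eq ?_
    have e1 : K * P * (1+x^2) / (1+x^2)^N = (K*P) * (1+x^2) ^ ((1:ℝ) - (N:ℝ)) := by
      rw [Real.rpow_sub h1x, Real.rpow_one, Real.rpow_natCast]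
      ring
    rw [e1, Real.mul_rpow (by positivity) (Real.rpow_nonneg h1x.le _),
      ← Real.rpow_mul h1x.le]
    congr 1
    rw [hr_def]; ring
  have hmaj : Integrable (fun x : ℝ => ((1:ℝ) + x^2) ^ (-r/2)) volume := by
    have hi := integrable_rpow_neg_one_add_norm_sq (E := ℝ) (μ := volume) (r := r)
      (by simpa using hr1)
    simpa [Real.norm_eq_abs, sq_abs] using hi
  have hgmeas : AEStronglyMeasurable g volume := by
    have he : g = fun x => |h x| ^ (p-2) * h x := funext hg
    rw [he]
    have hm : Measurable fun x => |h x| ^ (p-2) * h x := by fun_prop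
    exact hm.aestronglyMeasurable
  have hint : Integrable g volume := by
    refine (hmaj.const_mul ((K*P)^(p-1))).mono' hgmeas ?_
    exact Eventually.of_forall fun x => by rw [Real.norm_eq_abs]; exact hgbound x
  -- the sign-factorization of h near 1
  set w : ℝ → ℝ := fun x => (x+1) * (Real.cosh (2*π) - Real.cos (2*π*x)) / D x with hw_def
  have hwcont : Continuous w := by
    rw [hw_def]
    exact Continuous.div (by continuity) hDcont fun x => (hD x).ne'
  have hwpos : ∀ x : ℝ, 0 < x → 0 < w x := by
    intro x hx
    have hc := Real.cos_le_one (2*π*x)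
    exact div_pos (mul_pos (by linarith) (by linarith)) (hD x)
  have hhw : ∀ x, h x = -(x-1) * w x := by
    intro x
    rw [hh x, hw_def]
    have hDne := (hD x).ne'
    field_simp
    ring
  set W : ℝ → ℝ := fun x => (w x) ^ (p-1) with hW_def
  have hW1 : (0:ℝ) < W 1 := Real.rpow_pos_of_pos (hwpos 1 one_pos) _
  have hgsplit : ∀ x : ℝ, 0 < x → g x = -(x-1) * |x-1| ^ (p-2) * W x := by
    intro x hx
    have hwx := hwpos x hx
    rw [hg x, hhw x]
    have habs : |(-(x-1)) * w x| = |x-1| * w x := by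
      rw [abs_mul, abs_neg, abs_of_pos hwx]
    rw [habs, Real.mul_rpow (abs_nonneg _) hwx.le, hW_def]
    have e2 : (w x) ^ (p-2) * w x = (w x) ^ (p-1) := by
      rw [← Real.rpow_add_one hwx.ne' (p-2)]
      congr 1; ring
    calc |x-1| ^ (p-2) * (w x) ^ (p-2) * (-(x-1) * w x)
        = -(x-1) * |x-1| ^ (p-2) * ((w x) ^ (p-2) * w x) := by ring
      _ = -(x-1) * |x-1| ^ (p-2) * (w x) ^ (p-1) := by rw [e2]
  have hWcontAt : ContinuousAt W 1 := by
    have hrc : ContinuousAt (fun t : ℝ => t ^ (p-1)) (w 1) :=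
      Real.continuousAt_rpow_const (w 1) (p-1) (Or.inl (hwpos 1 one_pos).ne')
    exact hrc.comp hwcont.continuousAt
  have key : ¬ AnalyticAt ℝ g 1 := by
    intro Hana
    have hmem : Ioo (1:ℝ) 2 ∈ 𝓝[>] (1:ℝ) :=
      Ioo_mem_nhdsGT_of_mem (by norm_num : (1:ℝ) ∈ Ico (1:ℝ) 2)
    by_cases horder : analyticOrderAt g 1 = ⊤
    · have hev := analyticOrderAt_eq_top.mp horder
      have hev' : ∀ᶠ x in 𝓝[>] (1:ℝ), g x = 0 := hev.filter_mono nhdsWithin_le_nhds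
      obtain ⟨x, hx0, hxI⟩ := (hev'.and (eventually_of_mem hmem fun x hx => hx)).exists
      have hx1 : (1:ℝ) < x := hxI.1
      have hgx : g x ≠ 0 := by
        rw [hgsplit x (by linarith)]
        have h1 : (0:ℝ) < x - 1 := by linarith
        have h2 : (0:ℝ) < |x-1| ^ (p-2) :=
          Real.rpow_pos_of_pos (by rw [abs_pos]; exact sub_ne_zero.mpr (ne_of_gt hx1)) _
        have h3 : (0:ℝ) < W x := Real.rpow_pos_of_pos (hwpos x (by linarith)) _
        have : -(x-1) * |x-1| ^ (p-2) * W x < 0 := by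
          have hm := mul_pos (mul_pos h1 h2) h3
          nlinarith
        exact ne_of_lt this
      exact hgx hx0
    · obtain ⟨n, hn⟩ := WithTop.ne_top_iff_exists.mp horder
      obtain ⟨u, huA, hu0, hueq⟩ := (Hana.analyticOrderAt_eq_natCast).mp hn.symm
      set a : ℝ := p - 1 - (n:ℝ) with ha_def
      -- Right-hand side analysis
      have hkeyR : ∀ᶠ x in 𝓝[>] (1:ℝ), u x = -((x-1) ^ a) * W x := by
        filter_upwards [hueq.filter_mono nhdsWithin_le_nhds,
          eventually_of_mem hmem fun x hx => hx] with x hgx hxI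
        have h1 : (0:ℝ) < x - 1 := by linarith [hxI.1]
        have hgs := hgsplit x (by linarith [hxI.1])
        rw [abs_of_pos h1] at hgs
        rw [smul_eq_mul] at hgx
        have eL : (x-1) * (x-1) ^ (p-2) = (x-1) ^ (p-1) := by
          rw [mul_comm, ← Real.rpow_add_one h1.ne' (p-2)]
          congr 1; ring
        have eR : (x-1) ^ a * (x-1) ^ (n:ℕ) = (x-1) ^ (p-1) := by
          rw [← Real.rpow_natCast (x-1) n, ← Real.rpow_add h1]
          congr 1
          rw [ha_def]; ring
        have hne : ((x-1):ℝ) ^ (n:ℕ) ≠ 0 := pow_ne_zero _ h1.ne'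
        have h2 : (x-1:ℝ) ^ (n:ℕ) * u x = (x-1) ^ (n:ℕ) * (-((x-1) ^ a) * W x) := by
          rw [← hgx, hgs]
          calc -(x-1) * (x-1) ^ (p-2) * W x
              = -((x-1) * (x-1) ^ (p-2)) * W x := by ring
            _ = -((x-1) ^ (p-1)) * W x := by rw [eL]
            _ = -((x-1) ^ a * (x-1) ^ (n:ℕ)) * W x := by rw [eR]
            _ = (x-1) ^ (n:ℕ) * (-((x-1) ^ a) * W x) := by ring
        exact mul_left_cancel₀ hne h2
      have hulim : Tendsto u (𝓝[>] (1:ℝ)) (𝓝 (u 1)) :=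
        (huA.continuousAt.tendsto).mono_left nhdsWithin_le_nhds
      have hWlim : Tendsto W (𝓝[>] (1:ℝ)) (𝓝 (W 1)) :=
        hWcontAt.tendsto.mono_left nhdsWithin_le_nhds
      have hTdiv : Tendsto (fun x => -(u x) / W x) (𝓝[>] (1:ℝ)) (𝓝 (-(u 1) / W 1)) :=
        (hulim.neg).div hWlim hW1.ne'
      have hT : Tendsto (fun x : ℝ => (x-1) ^ a) (𝓝[>] (1:ℝ)) (𝓝 (-(u 1) / W 1)) := by
        refine hTdiv.congr' ?_
        filter_upwards [hkeyR, eventually_of_mem hmem fun x hx => hx] with x hux hxI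
        have hWx : W x ≠ 0 := (Real.rpow_pos_of_pos (hwpos x (by linarith [hxI.1])) _).ne'
        rw [hux]
        field_simp
      have hL0 : -(u 1) / W 1 ≠ 0 := by
        apply div_ne_zero _ hW1.ne'
        simpa using hu0
      obtain ⟨ha0, hLval⟩ := aux_rpow_limit hL0 hT
      have hnp : (n:ℝ) = p - 1 := by rw [ha_def] at ha0; linarith
      have hu1 : u 1 = -(W 1) := by
        rw [div_eq_one_iff_eq hW1.ne'] at hLval
        linarith
      -- Left-hand side analysis
      have hmemL : Ioo (0:ℝ) 1 ∈ 𝓝[<] (1:ℝ) :=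
        Ioo_mem_nhdsLT_of_mem (by norm_num : (1:ℝ) ∈ Ioc (0:ℝ) 1)
      have hkeyL : ∀ᶠ x in 𝓝[<] (1:ℝ), (-1:ℝ) ^ (n:ℕ) * u x = W x := by
        filter_upwards [hueq.filter_mono nhdsWithin_le_nhds,
          eventually_of_mem hmemL fun x hx => hx] with x hgx hxI
        have h1 : (0:ℝ) < 1 - x := by linarith [hxI.2]
        have hgs := hgsplit x hxI.1
        rw [smul_eq_mul] at hgx
        have habs : |x - 1| = 1 - x := by rw [abs_of_neg (by linarith : x - 1 < 0)]; ring
        rw [habs] at hgs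
        have eL : -(x-1) * (1-x) ^ (p-2) = (1-x) ^ (p-1) := by
          rw [show -(x-1) = 1-x by ring, mul_comm, ← Real.rpow_add_one h1.ne' (p-2)]
          congr 1; ring
        have e2 : (x-1:ℝ) ^ (n:ℕ) = (-1:ℝ) ^ (n:ℕ) * (1-x) ^ (p-1) := by
          rw [show (x-1:ℝ) = -(1-x) by ring, neg_pow, ← Real.rpow_natCast (1-x) n, hnp]
        have h3 : ((1-x):ℝ) ^ (p-1) ≠ 0 := (Real.rpow_pos_of_pos h1 _).ne'
        have h4 : (1-x:ℝ) ^ (p-1) * ((-1:ℝ) ^ (n:ℕ) * u x) = (1-x) ^ (p-1) * W x := by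
          calc (1-x:ℝ) ^ (p-1) * ((-1:ℝ) ^ (n:ℕ) * u x)
              = ((-1:ℝ) ^ (n:ℕ) * (1-x) ^ (p-1)) * u x := by ring
            _ = (x-1) ^ (n:ℕ) * u x := by rw [← e2]
            _ = g x := hgx.symm
            _ = -(x-1) * (1-x) ^ (p-2) * W x := hgs
            _ = (1-x) ^ (p-1) * W x := by rw [eL]
        exact mul_left_cancel₀ h3 h4
      have hulimL : Tendsto (fun x => (-1:ℝ) ^ (n:ℕ) * u x) (𝓝[<] (1:ℝ))
          (𝓝 ((-1:ℝ) ^ (n:ℕ) * u 1)) :=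
        (tendsto_const_nhds.mul (huA.continuousAt.tendsto.mono_left nhdsWithin_le_nhds))
      have hWlimL : Tendsto W (𝓝[<] (1:ℝ)) (𝓝 (W 1)) :=
        hWcontAt.tendsto.mono_left nhdsWithin_le_nhds
      have hfin : (-1:ℝ) ^ (n:ℕ) * u 1 = W 1 :=
        tendsto_nhds_unique (hulimL.congr' hkeyL) hWlimL
      rw [hu1] at hfin
      rcases Nat.even_or_odd n with he | ho
      · rw [he.neg_one_pow] at hfin
        nlinarith
      · obtain ⟨k, hk⟩ := ho
        apply hpe
        refine ⟨k+1, ?_⟩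
        have h5 : (n:ℝ) = 2*(k:ℝ) + 1 := by rw [hk]; push_cast; ring
        push_cast
        linarith [hnp, h5]
  exact ⟨hint, fun H => key (H 1), key⟩
end
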